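/- Soundness: For every set Γ of sentences of L(P) and every sentence φ, if Γ ⊢ φ then Γ ⊨ φ (every model with infinite universe satisfying all sentences of Γ also satisfies φ). -/

import Mathlib

open Cardinal

/-- Sentences of the language L(P): `all p q` = ∀(p,q), `exi p q` = ∃(p,q),
`geq p q` = ∃≥(p,q) (at least as many p as q), `gt p q` = ∃>(p,q) (more p than q). -/
inductive Sentence (P : Type u) : Type u
  | all : P → P → Sentence P
  | exi : P → P → Sentence P
  | geq : P → P → Sentence P
  | gt  : P → P → Sentence P

/-- Satisfaction of a sentence in a structure with interpretation `I`. -/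
def Satisfies {P : Type u} {M : Type v} (I : P → Set M) : Sentence P → Prop
  | .all p q => I p ⊆ I q
  | .exi p q => (I p ∩ I q).Nonempty
  | .geq p q => #(I q) ≤ #(I p)
  | .gt p q  => #(I q) < #(I p)

/-- The derivability relation Γ ⊢ φ, where `c` is noun complementation. -/
inductive Derives {P : Type u} (c : P → P) (Γ : Set (Sentence P)) : Sentence P → Prop
  | hyp {φ} : φ ∈ Γ → Derives c Γ φ
  | axm (p : P) : Derives c Γ (.all p p)
  | barbara {n p q} : Derives c Γ (.all n p) → Derives c Γ (.all p q) → Derives c Γ (.all n q)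
  | some_ {p q} : Derives c Γ (.exi p q) → Derives c Γ (.exi p p)
  | conversion {p q} : Derives c Γ (.exi q p) → Derives c Γ (.exi p q)
  | darii {p n q} : Derives c Γ (.exi p n) → Derives c Γ (.all n q) → Derives c Γ (.exi p q)
  | anti {p q} : Derives c Γ (.all p q) → Derives c Γ (.all (c q) (c p))
  | zero {p q} : Derives c Γ (.all p (c p)) → Derives c Γ (.all p q)
  | one {p q} : Derives c Γ (.all (c p) p) → Derives c Γ (.all q p)
  | subsetSize {p q} : Derives c Γ (.all p q) → Derives c Γ (.geq q p)
  | cardTrans {n p q} : Derives c Γ (.geq n p) → Derives c Γ (.geq p q) → Derives c Γ (.geq n q)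
  | cardExi {p q} : Derives c Γ (.exi p p) → Derives c Γ (.geq q p) → Derives c Γ (.exi q q)
  | moreAtLeast {p q} : Derives c Γ (.gt p q) → Derives c Γ (.geq p q)
  | moreLeft {n p q} : Derives c Γ (.gt n p) → Derives c Γ (.geq p q) → Derives c Γ (.gt n q)
  | moreRight {n p q} : Derives c Γ (.geq n p) → Derives c Γ (.gt p q) → Derives c Γ (.gt n q)
  | moreSome {p q} : Derives c Γ (.gt p q) → Derives c Γ (.exi p (c q))
  | exFalso {p q φ} : Derives c Γ (.exi p q) → Derives c Γ (.all q (c q)) → Derives c Γ φ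
  | exFalsoCard {p q φ} : Derives c Γ (.gt p q) → Derives c Γ (.geq q p) → Derives c Γ φ
  | nonEmpty {p} : Derives c Γ (.geq p (c p)) → Derives c Γ (.exi p p)
  | nonEmptyMore {p} : Derives c Γ (.all (c p) p) → Derives c Γ (.gt p (c p))
  | weakMoreAnti {p q x} : Derives c Γ (.gt q p) → Derives c Γ (.geq (c p) x)
  | up {x p q} : Derives c Γ (.geq x p) → Derives c Γ (.geq x (c p)) → Derives c Γ (.geq x q)

/-- Soundness: if Γ ⊢ φ then every model (with infinite universe, interpreting
complements correctly) satisfying all of Γ also satisfies φ. -/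
theorem soundness {P : Type u} (c : P → P) (hc : ∀ p, c (c p) = p)
    (Γ : Set (Sentence P)) (φ : Sentence P) (h : Derives c Γ φ) :
    ∀ (M : Type v) (I : P → Set M), Infinite M → (∀ p, I (c p) = (I p)ᶜ) →
      (∀ ψ ∈ Γ, Satisfies I ψ) → Satisfies I φ := by
  induction h with
  | hyp hφ => intro M I _ _ hΓ; exact hΓ _ hφ
  | axm p => intro M I _ _ _; exact subset_rfl
  | barbara _ _ ih1 ih2 =>
      intro M I h1 h2 h3
      exact (ih1 M I h1 h2 h3).trans (ih2 M I h1 h2 h3)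
  | some_ _ ih =>
      intro M I h1 h2 h3
      obtain ⟨x, hx, _⟩ := ih M I h1 h2 h3
      exact ⟨x, hx, hx⟩
  | conversion _ ih =>
      intro M I h1 h2 h3
      obtain ⟨x, hx, hy⟩ := ih M I h1 h2 h3
      exact ⟨x, hy, hx⟩
  | darii _ _ ih1 ih2 =>
      intro M I h1 h2 h3
      obtain ⟨x, hx, hy⟩ := ih1 M I h1 h2 h3
      exact ⟨x, hx, ih2 M I h1 h2 h3 hy⟩
  | anti _ ih =>
      intro M I h1 h2 h3
      have := ih M I h1 h2 h3
      simp only [Satisfies, h2] at *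
      exact Set.compl_subset_compl.mpr this
  | zero _ ih =>
      intro M I h1 h2 h3
      have := ih M I h1 h2 h3
      simp only [Satisfies, h2] at this ⊢
      intro x hx
      exact absurd hx (this hx)
  | one _ ih =>
      intro M I h1 h2 h3
      have := ih M I h1 h2 h3
      simp only [Satisfies, h2] at this ⊢
      intro x _
      by_contra hx
      exact hx (this hx)
  | subsetSize _ ih =>
      intro M I h1 h2 h3
      exact Cardinal.mk_le_mk_of_subset (ih M I h1 h2 h3)
  | cardTrans _ _ ih1 ih2 =>
      intro M I h1 h2 h3
      exact (ih2 M I h1 h2 h3).trans (ih1 M I h1 h2 h3)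
  | cardExi _ _ ih1 ih2 =>
      intro M I h1 h2 h3
      have hp := ih1 M I h1 h2 h3
      have hq := ih2 M I h1 h2 h3
      simp only [Satisfies] at hp hq ⊢
      have hne : #(I _) ≠ 0 := Cardinal.mk_ne_zero_iff.mpr
        (Set.nonempty_coe_sort.mpr (hp.mono Set.inter_subset_left))
      obtain ⟨⟨x, hx⟩⟩ := Cardinal.mk_ne_zero_iff.mp
        (fun h0 => hne (le_antisymm (h0 ▸ hq) zero_le))
      rw [Set.inter_self]
      exact ⟨x, hx⟩
  | moreAtLeast _ ih =>
      intro M I h1 h2 h3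
      exact (ih M I h1 h2 h3).le
  | moreLeft _ _ ih1 ih2 =>
      intro M I h1 h2 h3
      exact (ih2 M I h1 h2 h3).trans_lt (ih1 M I h1 h2 h3)
  | moreRight _ _ ih1 ih2 =>
      intro M I h1 h2 h3
      exact (ih2 M I h1 h2 h3).trans_le (ih1 M I h1 h2 h3)
  | moreSome _ ih =>
      intro M I h1 h2 h3
      have hlt := ih M I h1 h2 h3
      simp only [Satisfies] at hlt ⊢
      rw [Set.nonempty_iff_ne_empty]
      intro hemp
      rw [h2, ← Set.diff_eq] at hemp
      exact absurd (Cardinal.mk_le_mk_of_subset (Set.diff_eq_empty.mp hemp)) hlt.not_ge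
  | exFalso _ _ ih1 ih2 =>
      intro M I h1 h2 h3
      obtain ⟨x, _, hq⟩ := ih1 M I h1 h2 h3
      have := ih2 M I h1 h2 h3 hq
      rw [h2] at this
      exact absurd hq this
  | exFalsoCard _ _ ih1 ih2 =>
      intro M I h1 h2 h3
      exact absurd (ih2 M I h1 h2 h3) (ih1 M I h1 h2 h3).not_ge
  | nonEmpty _ ih =>
      intro M I h1 h2 h3
      have hle := ih M I h1 h2 h3
      simp only [Satisfies] at hle ⊢
      rw [h2] at hle
      rw [Set.nonempty_iff_ne_empty]
      intro hemp
      rw [Set.inter_self] at hemp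
      rw [hemp] at hle
      simp only [Set.compl_empty, Cardinal.mk_univ, Cardinal.mk_emptyCollection,
        nonpos_iff_eq_zero, Cardinal.mk_eq_zero_iff] at hle
      exact not_isEmpty_of_nonempty M hle
  | @nonEmptyMore p _ ih =>
      intro M I h1 h2 h3
      have hsub := ih M I h1 h2 h3
      simp only [Satisfies] at hsub ⊢
      rw [h2] at hsub ⊢
      have huniv : I p = Set.univ := by
        ext x; simp only [Set.mem_univ, iff_true]
        by_contra hx
        exact hx (hsub hx)
      rw [huniv]
      simp only [Set.compl_univ, Cardinal.mk_emptyCollection, Cardinal.mk_univ]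
      exact pos_iff_ne_zero.mpr (Cardinal.mk_ne_zero M)
  | @weakMoreAnti p q x _ ih =>
      intro M I h1 h2 h3
      have hlt := ih M I h1 h2 h3
      simp only [Satisfies] at hlt ⊢
      rw [h2]
      have hp : #(I p) < #M := lt_of_lt_of_le hlt (Cardinal.mk_le_mk_of_subset (Set.subset_univ _) |>.trans_eq (by simp))
      rw [Cardinal.mk_compl_of_infinite _ hp]
      exact (Cardinal.mk_le_mk_of_subset (Set.subset_univ (I x))).trans_eq (by simp)
  | @up x p q _ _ ih1 ih2 =>
      intro M I h1 h2 h3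
      have hle1 := ih1 M I h1 h2 h3
      have hle2 := ih2 M I h1 h2 h3
      simp only [Satisfies] at hle1 hle2 ⊢
      rw [h2] at hle2
      have hM : (#M) ≤ #(I x) := by
        have := Cardinal.mk_sum_compl (I p)
        rw [← this]
        have hx : Cardinal.aleph0.{v} ≤ #(I x) := by
          by_contra hfin
          push_neg at hfin
          have : (#M) < Cardinal.aleph0 := by
            rw [← Cardinal.mk_sum_compl (I p)]
            exact Cardinal.add_lt_aleph0 (hle1.trans_lt hfin) (hle2.trans_lt hfin)
          exact absurd this (Cardinal.infinite_iff.mp h1).not_gt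
        calc #(I p) + #(↥(I p)ᶜ) ≤ #(I x) + #(I x) := add_le_add hle1 hle2
          _ = #(I x) := Cardinal.add_eq_self hx
      exact (Cardinal.mk_le_mk_of_subset (Set.subset_univ (I q))).trans ((Cardinal.mk_univ).le.trans hM)
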